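/- Let 𝒫 be a finite set of pairwise disjoint upward paths in ℝ². Then the transitive closure ≺* of the relation ≺ restricted to 𝒫 is a strict partial order on 𝒫 (irreflexive and transitive, hence also asymmetric). -/

import Mathlib

open Set

/-- An upward path: a continuous injective curve on `[0,1]` in `ℝ²` whose
y-coordinate is strictly monotone increasing. -/
structure UpwardPath where
  toFun : ℝ → ℝ × ℝ
  continuousOn : ContinuousOn toFun (Set.Icc 0 1)
  injOn : Set.InjOn toFun (Set.Icc 0 1)
  strictMonoY : StrictMonoOn (fun t => (toFun t).2) (Set.Icc 0 1)

namespace UpwardPath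

/-- The image (trace) of an upward path in the plane. -/
def image (P : UpwardPath) : Set (ℝ × ℝ) := P.toFun '' Set.Icc 0 1

/-- The set of points strictly to the right of `P`, at heights in the y-range of `P`. -/
def Right (P : UpwardPath) : Set (ℝ × ℝ) :=
  {p | (P.toFun 0).2 ≤ p.2 ∧ p.2 ≤ (P.toFun 1).2 ∧
    ∀ u' : ℝ, (u', p.2) ∈ P.image → u' < p.1}

/-- The set of points strictly to the left of `P`, at heights in the y-range of `P`. -/
def Left (P : UpwardPath) : Set (ℝ × ℝ) :=
  {p | (P.toFun 0).2 ≤ p.2 ∧ p.2 ≤ (P.toFun 1).2 ∧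
    ∀ u' : ℝ, (u', p.2) ∈ P.image → p.1 < u'}

/-- `P.Prec Q` (written `P ≺ Q`): some point of `Q` lies strictly to the right
(same y-coordinate, larger x-coordinate) of some point of `P`. -/
def Prec (P Q : UpwardPath) : Prop :=
  ∃ p ∈ P.image, ∃ q ∈ Q.image, p.2 = q.2 ∧ p.1 < q.1

/-- The y-range of an upward path. -/
def yRange (P : UpwardPath) : Set ℝ := Set.Icc (P.toFun 0).2 (P.toFun 1).2

end UpwardPath


namespace UpwardPath

noncomputable section

variable (P : UpwardPath)

/-- y-coordinate function. -/
def g : ℝ → ℝ := fun t => (P.toFun t).2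

lemma contg : ContinuousOn P.g (Icc 0 1) :=
  continuous_snd.comp_continuousOn P.continuousOn

lemma g01 : P.g 0 ≤ P.g 1 :=
  le_of_lt (P.strictMonoY (by simp) (by simp [zero_le_one]) zero_lt_one)

lemma g_mem {t : ℝ} (ht : t ∈ Icc (0:ℝ) 1) : P.g t ∈ Icc (P.g 0) (P.g 1) :=
  ⟨P.strictMonoY.monotoneOn (by simp) ht ht.1, P.strictMonoY.monotoneOn ht (by simp [zero_le_one]) ht.2⟩

lemma yRange_eq : P.yRange = Icc (P.g 0) (P.g 1) := rfl

/-- restricted map as equiv -/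
def F : Icc (0:ℝ) 1 → Icc (P.g 0) (P.g 1) := fun t => ⟨P.g t, P.g_mem t.2⟩

lemma contF : Continuous P.F :=
  Continuous.subtype_mk (P.contg.restrict) _

lemma bijF : Function.Bijective P.F := by
  constructor
  · intro s t h
    exact Subtype.ext (P.strictMonoY.injOn s.2 t.2 (congrArg Subtype.val h))
  · rintro ⟨y, hy⟩
    obtain ⟨t, ht, hgt⟩ := intermediate_value_Icc zero_le_one P.contg hy
    exact ⟨⟨t, ht⟩, Subtype.ext hgt⟩

def homeo : Icc (0:ℝ) 1 ≃ₜ Icc (P.g 0) (P.g 1) :=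
  Continuous.homeoOfEquivCompactToT2 (f := Equiv.ofBijective P.F P.bijF) P.contF

/-- the parameter with given height -/
def param (y : ℝ) : ℝ :=
  if h : y ∈ Icc (P.g 0) (P.g 1) then (P.homeo.symm ⟨y, h⟩ : ℝ) else 0

lemma param_mem {y : ℝ} (hy : y ∈ P.yRange) : P.param y ∈ Icc (0:ℝ) 1 := by
  rw [yRange_eq] at hy
  rw [param, dif_pos hy]
  exact (P.homeo.symm ⟨y, hy⟩).2

lemma g_param {y : ℝ} (hy : y ∈ P.yRange) : P.g (P.param y) = y := by
  rw [yRange_eq] at hy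
  rw [param, dif_pos hy]
  have := P.homeo.apply_symm_apply ⟨y, hy⟩
  have := congrArg Subtype.val this
  exact this

end

end UpwardPath
namespace UpwardPath

noncomputable section

variable (P : UpwardPath)

/-- x-coordinate of the unique point of `P` at height `y`. -/
def xf (y : ℝ) : ℝ := (P.toFun (P.param y)).1

lemma point_mem {y : ℝ} (hy : y ∈ P.yRange) : (P.xf y, y) ∈ P.image := by
  refine ⟨P.param y, P.param_mem hy, ?_⟩
  have hg := P.g_param hy
  exact Prod.ext rfl hg

variable {P}

lemma mem_yRange_of_mem {u y : ℝ} (h : (u, y) ∈ P.image) : y ∈ P.yRange := by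
  obtain ⟨t, ht, hft⟩ := h
  have : P.g t = y := congrArg Prod.snd hft
  rw [yRange_eq, ← this]
  exact P.g_mem ht

lemma eq_xf_of_mem {u y : ℝ} (h : (u, y) ∈ P.image) : u = P.xf y := by
  obtain ⟨t, ht, hft⟩ := h
  have hy : y ∈ P.yRange := mem_yRange_of_mem ⟨t, ht, hft⟩
  have hgy : P.g t = y := congrArg Prod.snd hft
  have hpar : t = P.param y :=
    P.strictMonoY.injOn ht (P.param_mem hy) (hgy.trans (P.g_param hy).symm)
  calc u = (P.toFun t).1 := (congrArg Prod.fst hft).symm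
  _ = P.xf y := by rw [hpar]; rfl

variable (P)

lemma contXf : ContinuousOn P.xf P.yRange := by
  rw [yRange_eq, continuousOn_iff_continuous_restrict]
  have h1 : Continuous fun z : Icc (P.g 0) (P.g 1) =>
      (P.toFun ((P.homeo.symm z : ℝ))) := by
    apply P.continuousOn.comp_continuous
      (continuous_subtype_val.comp P.homeo.symm.continuous)
    exact fun z => (P.homeo.symm z).2
  have : (Icc (P.g 0) (P.g 1)).domRestrict P.xf =
      fun z => (P.toFun ((P.homeo.symm z : ℝ))).1 := by
    funext z
    simp only [domRestrict, xf, param, dif_pos z.2]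
  rw [this]
  exact continuous_fst.comp h1

end

end UpwardPath
namespace UpwardPath

variable {P Q : UpwardPath}

lemma ne_xf (hd : Disjoint P.image Q.image) {y : ℝ}
    (hy : y ∈ P.yRange ∩ Q.yRange) : P.xf y ≠ Q.xf y := by
  intro h
  have h1 := P.point_mem hy.1
  have h2 := Q.point_mem hy.2
  rw [h] at h1
  exact Set.disjoint_left.mp hd h1 h2

lemma ordConn : OrdConnected (P.yRange ∩ Q.yRange) :=
  Set.OrdConnected.inter Set.ordConnected_Icc Set.ordConnected_Icc

lemma signConst (hd : Disjoint P.image Q.image) {y₁ y₂ : ℝ}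
    (h1 : y₁ ∈ P.yRange ∩ Q.yRange) (h2 : y₂ ∈ P.yRange ∩ Q.yRange)
    (hx : P.xf y₁ < Q.xf y₁) : P.xf y₂ < Q.xf y₂ := by
  by_contra hcon
  push_neg at hcon
  have hne := ne_xf hd h2
  have hlt : Q.xf y₂ < P.xf y₂ := lt_of_le_of_ne hcon (fun h => hne h.symm)
  set h : ℝ → ℝ := fun y => Q.xf y - P.xf y with hh
  have hsub : uIcc y₁ y₂ ⊆ P.yRange ∩ Q.yRange := ordConn.uIcc_subset h1 h2
  have hcont : ContinuousOn h (uIcc y₁ y₂) :=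
    ((Q.contXf.mono (fun z hz => (hsub hz).2)).sub
      (P.contXf.mono (fun z hz => (hsub hz).1)))
  have hmem : (0:ℝ) ∈ uIcc (h y₁) (h y₂) := by
    rw [Set.mem_uIcc]
    right
    constructor
    · simp [hh]; linarith
    · simp [hh]; linarith
  obtain ⟨y, hy, hy0⟩ := intermediate_value_uIcc hcont hmem
  have : P.xf y = Q.xf y := by simp [hh] at hy0; linarith
  exact ne_xf hd (hsub hy) this

lemma prec_iff : P.Prec Q ↔ ∃ y ∈ P.yRange ∩ Q.yRange, P.xf y < Q.xf y := by
  constructor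
  · rintro ⟨p, hp, q, hq, hyy, hxx⟩
    refine ⟨p.2, ⟨mem_yRange_of_mem (by simpa using hp),
      hyy ▸ mem_yRange_of_mem (by simpa using hq)⟩, ?_⟩
    have e1 : p.1 = P.xf p.2 := eq_xf_of_mem (by simpa using hp)
    have e2 : q.1 = Q.xf q.2 := eq_xf_of_mem (by simpa using hq)
    rw [← e1, ← hyy] at *
    rw [e2] at hxx
    rw [hyy] at hxx ⊢
    rwa [← e1]
  · rintro ⟨y, ⟨hyP, hyQ⟩, hx⟩
    exact ⟨(P.xf y, y), P.point_mem hyP, (Q.xf y, y), Q.point_mem hyQ, rfl, hx⟩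

lemma prec_all (hd : Disjoint P.image Q.image) (h : P.Prec Q) {y : ℝ}
    (hy : y ∈ P.yRange ∩ Q.yRange) : P.xf y < Q.xf y := by
  obtain ⟨y₀, hy₀, hx₀⟩ := prec_iff.mp h
  exact signConst hd hy₀ hy hx₀

lemma prec_irrefl (P : UpwardPath) : ¬ P.Prec P := by
  rintro ⟨p, hp, q, hq, hyy, hxx⟩
  have e1 : p.1 = P.xf p.2 := eq_xf_of_mem (by simpa using hp)
  have e2 : q.1 = P.xf q.2 := eq_xf_of_mem (by simpa using hq)
  rw [e1, e2, hyy] at hxx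
  exact lt_irrefl _ hxx

lemma prec_asymm (hd : Disjoint P.image Q.image) (h : P.Prec Q) : ¬ Q.Prec P := by
  intro h'
  obtain ⟨y, hy, hx⟩ := prec_iff.mp h
  have := prec_all hd.symm h' ⟨hy.2, hy.1⟩
  linarith

end UpwardPath
namespace UpwardPath

/-- top height of a path -/
noncomputable def top (P : UpwardPath) : ℝ := (P.toFun 1).2

lemma top_mem_yRange (P : UpwardPath) : P.top ∈ P.yRange := ⟨P.g01, le_refl _⟩

lemma le_top_of_mem {P : UpwardPath} {y : ℝ} (hy : y ∈ P.yRange) : y ≤ P.top := hy.2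

lemma no_cycle (S : Set UpwardPath)
    (hdisj : S.Pairwise fun P Q => Disjoint P.image Q.image) :
    ∀ n, 0 < n → ∀ f : ℕ → UpwardPath, (∀ i, f i ∈ S) → f n = f 0 →
      (∀ i < n, (f i).Prec (f (i + 1))) → False := by
  intro n
  induction n using Nat.strong_induction_on with
  | _ n IH =>
  intro hn f hmem hcyc hedge
  rcases Nat.lt_or_ge n 2 with h2 | h2
  · -- n = 1
    interval_cases n
    have := hedge 0 (by norm_num)
    rw [hcyc] at this
    exact prec_irrefl _ this
  · -- n ≥ 2 : rotate so that position 1 has minimal top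
    obtain ⟨k, hk, hmin⟩ := Finset.exists_min_image (Finset.range n)
      (fun i => (f i).top) ⟨0, Finset.mem_range.mpr hn⟩
    rw [Finset.mem_range] at hk
    set r : ℕ := k + (n - 1) with hr
    set g : ℕ → UpwardPath := fun i => f ((i + r) % n) with hg
    -- g is a cycle
    have hgmem : ∀ i, g i ∈ S := fun i => hmem _
    have hgedge : ∀ i < n, (g i).Prec (g (i + 1)) := by
      intro i hi
      have hj : (i + r) % n < n := Nat.mod_lt _ hn
      have key : g (i + 1) = f ((i + r) % n + 1) := by
        show f ((i + 1 + r) % n) = f ((i + r) % n + 1)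
        have : (i + 1 + r) % n = ((i + r) % n + 1) % n := by
          rw [Nat.mod_add_mod]; ring_nf
        rw [this]
        rcases Nat.lt_or_ge ((i + r) % n + 1) n with h | h
        · rw [Nat.mod_eq_of_lt h]
        · have heq : (i + r) % n + 1 = n := le_antisymm hj h
          rw [heq, Nat.mod_self, ← hcyc]
      rw [key]
      exact hedge _ hj
    have hg1 : g 1 = f k := by
      show f ((1 + r) % n) = f k
      have : 1 + r = k + n := by omega
      rw [this, Nat.add_mod_right, Nat.mod_eq_of_lt hk]
    have hgmin : ∀ i, (g 1).top ≤ (g i).top := by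
      intro i
      rw [hg1]
      exact hmin _ (Finset.mem_range.mpr (Nat.mod_lt _ hn))
    -- edges
    have e0 : (g 0).Prec (g 1) := hgedge 0 hn
    have e1 : (g 1).Prec (g 2) := hgedge 1 h2
    have hne01 : g 0 ≠ g 1 := fun h => prec_irrefl _ (h ▸ e0)
    have hne12 : g 1 ≠ g 2 := fun h => prec_irrefl _ (h ▸ e1)
    have hd01 : Disjoint (g 0).image (g 1).image := hdisj (hgmem 0) (hgmem 1) hne01
    have hd12 : Disjoint (g 1).image (g 2).image := hdisj (hgmem 1) (hgmem 2) hne12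
    obtain ⟨y0, hy0, _⟩ := prec_iff.mp e0
    obtain ⟨y1, hy1, _⟩ := prec_iff.mp e1
    set y : ℝ := (g 1).top with hy
    have hymem1 : y ∈ (g 1).yRange := top_mem_yRange _
    have hymem0 : y ∈ (g 0).yRange := by
      constructor
      · exact le_trans hy0.1.1 (le_trans (le_top_of_mem hy0.2) (le_refl _))
      · exact le_trans (le_top_of_mem hymem1) (hgmin 0)
    have hymem2 : y ∈ (g 2).yRange := by
      constructor
      · exact le_trans hy1.2.1 (le_top_of_mem hy1.1)
      · exact le_trans (le_top_of_mem hymem1) (hgmin 2)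
    have hA : (g 0).xf y < (g 1).xf y := prec_all hd01 e0 ⟨hymem0, hymem1⟩
    have hB : (g 1).xf y < (g 2).xf y := prec_all hd12 e1 ⟨hymem1, hymem2⟩
    have hC : (g 0).xf y < (g 2).xf y := lt_trans hA hB
    by_cases h02 : g 0 = g 2
    · rw [h02] at hC
      exact lt_irrefl _ hC
    · -- shortcut cycle of length n - 1
      have hprec02 : (g 0).Prec (g 2) :=
        prec_iff.mpr ⟨y, ⟨hymem0, hymem2⟩, hC⟩
      set h : ℕ → UpwardPath := fun i => if i = 0 then g 0 else g (i + 1) with hhdef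
      apply IH (n - 1) (by omega) (by omega) h (fun i => by
        by_cases hi : i = 0 <;> simp [hhdef, hi] <;> exact hgmem _)
      · show (if n - 1 = 0 then g 0 else g (n - 1 + 1)) = (if 0 = 0 then g 0 else g 1)
        have hn1 : ¬ (n - 1 = 0) := by omega
        rw [if_pos rfl, if_neg hn1]
        have : n - 1 + 1 = n := by omega
        rw [this]
        show f ((n + r) % n) = f ((0 + r) % n)
        rw [Nat.add_comm n r, Nat.add_mod_right, Nat.zero_add]
      · intro i hi
        by_cases hi0 : i = 0
        · subst hi0
          show (if (0:ℕ) = 0 then g 0 else g 1).Prec (if (1:ℕ) = 0 then g 0 else g 2)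
          rw [if_pos rfl, if_neg one_ne_zero]
          exact hprec02
        · have h1 : ¬ (i = 0) := hi0
          have h2' : ¬ (i + 1 = 0) := by omega
          show (if i = 0 then g 0 else g (i + 1)).Prec
            (if i + 1 = 0 then g 0 else g (i + 1 + 1))
          rw [if_neg h1, if_neg h2']
          exact hgedge (i + 1) (by omega)

end UpwardPath
lemma chain_of_transGen {α : Type*} {r : α → α → Prop} {P Q : α}
    (h : Relation.TransGen r P Q) :
    ∃ n, 0 < n ∧ ∃ f : ℕ → α, f 0 = P ∧ f n = Q ∧ ∀ i < n, r (f i) (f (i + 1)) := by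
  induction h with
  | @single b hPQ =>
    refine ⟨1, one_pos, fun i => if i = 0 then P else b, by simp, by simp, ?_⟩
    intro i hi
    interval_cases i
    simpa using hPQ
  | @tail b c hPQ hQR IH =>
    obtain ⟨n, hn, f, hf0, hfn, hedge⟩ := IH
    refine ⟨n + 1, by omega, fun i => if i ≤ n then f i else c, by simp [hn.le, hf0], ?_, ?_⟩
    · simp
    · intro i hi
      rcases Nat.lt_or_ge i n with h | h
      · simp only [if_pos h.le, if_pos (by omega : i + 1 ≤ n)]
        exact hedge i h
      · have hieq : i = n := by omega
        rw [hieq]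
        simp only [if_pos (le_refl n), if_neg (by omega : ¬ (n + 1 ≤ n))]
        rw [hfn]
        exact hQR

theorem transGen_prec_strict_order' (S : Set UpwardPath) (hfin : S.Finite)
    (hdisj : S.Pairwise fun P Q => Disjoint P.image Q.image) :
    Irreflexive (Relation.TransGen fun P Q : S => UpwardPath.Prec P.1 Q.1) ∧
    Transitive (Relation.TransGen fun P Q : S => UpwardPath.Prec P.1 Q.1) ∧
    ∀ P Q : S, Relation.TransGen (fun P Q : S => UpwardPath.Prec P.1 Q.1) P Q →
      ¬ Relation.TransGen (fun P Q : S => UpwardPath.Prec P.1 Q.1) Q P := by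
  have hirr : Irreflexive (Relation.TransGen fun P Q : S => UpwardPath.Prec P.1 Q.1) := by
    intro P h
    obtain ⟨n, hn, f, hf0, hfn, hedge⟩ := chain_of_transGen h
    refine UpwardPath.no_cycle S hdisj n hn (fun i => (f i).1) (fun i => (f i).2) ?_ ?_
    · exact congrArg Subtype.val (hfn.trans hf0.symm)
    · exact hedge
  have htrans : Transitive (Relation.TransGen fun P Q : S => UpwardPath.Prec P.1 Q.1) :=
    fun _ _ _ h1 h2 => h1.trans h2
  exact ⟨hirr, htrans, fun P Q h1 h2 => hirr P (htrans h1 h2)⟩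

/-- For a finite set `S` of pairwise disjoint upward paths, the transitive
closure `≺*` of `≺` restricted to `S` is a strict partial order: irreflexive
and transitive (hence asymmetric). -/
theorem transGen_prec_strict_order (S : Set UpwardPath) (hfin : S.Finite)
    (hdisj : S.Pairwise fun P Q => Disjoint P.image Q.image) :
    Irreflexive (Relation.TransGen fun P Q : S => UpwardPath.Prec P.1 Q.1) ∧
    Transitive (Relation.TransGen fun P Q : S => UpwardPath.Prec P.1 Q.1) ∧
    ∀ P Q : S, Relation.TransGen (fun P Q : S => UpwardPath.Prec P.1 Q.1) P Q →
      ¬ Relation.TransGen (fun P Q : S => UpwardPath.Prec P.1 Q.1) Q P :=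
  transGen_prec_strict_order' S hfin hdisj
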